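/- Let x_1, …, x_N : [0,∞) → ℝ be absolutely continuous functions and B > 0 a constant such that for each i and almost every t ≥ 0, B(min_j x_j(t) − x_i(t)) ≤ ẋ_i(t) ≤ B(max_j x_j(t) − x_i(t)). Then M(t) = max_j x_j(t) is nonincreasing in t and m(t) = min_j x_j(t) is nondecreasing in t; in particular, x_i(t) ∈ [m(0), M(0)] for every i and every t ≥ 0, and both M(t) and m(t) converge to finite limits as t → ∞. -/

import Mathlib

open Filter Topology MeasureTheory

section helpers
open Set


lemma expFTC (B a b : ℝ) :
    ∫ τ in a..b, B * Real.exp (B * τ) = Real.exp (B * b) - Real.exp (B * a) := by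
  have h : ∀ τ : ℝ, HasDerivAt (fun u => Real.exp (B * u)) (B * Real.exp (B * τ)) τ := by
    intro τ
    have := (Real.hasDerivAt_exp (B * τ)).comp τ ((hasDerivAt_id τ).const_mul B)
    simpa [mul_comm, Function.comp_def] using this
  exact intervalIntegral.integral_eq_sub_of_hasDerivAt (fun τ _ => h τ)
    ((Continuous.mul continuous_const (Real.continuous_exp.comp (continuous_const.mul continuous_id))).intervalIntegrable a b)

lemma isup_neg {ι : Type*} [Nonempty ι] [Finite ι] (f : ι → ℝ) :
    (⨆ j, -(f j)) = -(⨅ j, f j) := by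
  apply le_antisymm
  · exact ciSup_le fun j => neg_le_neg (ciInf_le (Set.finite_range f).bddBelow j)
  · rw [neg_le]
    exact le_ciInf fun j => by
      rw [neg_le]
      exact le_ciSup (Set.finite_range (fun j => -(f j))).bddAbove j

lemma gron {φ : ℝ → ℝ} {s t c K : ℝ} (hst : s ≤ t) (hK : 0 ≤ K)
    (hφ : ContinuousOn φ (Set.Icc s t))
    (h : ∀ r ∈ Set.Icc s t, φ r ≤ c + ∫ τ in s..r, K * φ τ) :
    φ t ≤ c * Real.exp (K * (t - s)) := by
  set w : ℝ → ℝ := fun r => c + ∫ τ in s..r, K * φ τ with hw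
  have hKφ : ContinuousOn (fun τ => K * φ τ) (Set.Icc s t) := continuousOn_const.mul hφ
  have hIntIcc : IntegrableOn (fun τ => K * φ τ) (Set.Icc s t) := hKφ.integrableOn_Icc
  have hwc : ContinuousOn w (Set.Icc s t) := by
    apply continuousOn_const.add
    have := intervalIntegral.continuousOn_primitive_interval
      (f := fun τ => K * φ τ) (a := s) (b := t) (μ := volume) (by rwa [Set.uIcc_of_le hst])
    rwa [Set.uIcc_of_le hst] at this
  set ψ : ℝ → ℝ := fun r => w r * Real.exp (-(K * r)) with hψ
  have hwderiv : ∀ r ∈ Set.Ioo s t, HasDerivAt w (K * φ r) r := by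
    intro r hr
    have hmem : Set.Icc s t ∈ 𝓝 r := Icc_mem_nhds hr.1 hr.2
    have h1 : IntervalIntegrable (fun τ => K * φ τ) volume s r :=
      (hKφ.mono (by rw [Set.uIcc_of_le hr.1.le]; exact Set.Icc_subset_Icc le_rfl hr.2.le)).intervalIntegrable
    have h2 : StronglyMeasurableAtFilter (fun τ => K * φ τ) (𝓝 r) volume :=
      ⟨Set.Icc s t, hmem, hKφ.aestronglyMeasurable measurableSet_Icc⟩
    have h3 : ContinuousAt (fun τ => K * φ τ) r := hKφ.continuousAt hmem
    exact (intervalIntegral.integral_hasDerivAt_right h1 h2 h3).const_add c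
  have hψderiv : ∀ r ∈ Set.Ioo s t,
      HasDerivAt ψ ((K * φ r - K * w r) * Real.exp (-(K * r))) r := by
    intro r hr
    have he : HasDerivAt (fun u : ℝ => Real.exp (-(K * u))) (-K * Real.exp (-(K * r))) r := by
      have := (Real.hasDerivAt_exp (-(K * r))).comp r
        (((hasDerivAt_id r).const_mul K).neg)
      simpa [mul_comm, Function.comp_def, Pi.neg_apply] using this
    have := (hwderiv r hr).mul he
    refine this.congr_deriv ?_
    ring
  have hψanti : AntitoneOn ψ (Set.Icc s t) := by
    apply antitoneOn_of_deriv_nonpos (convex_Icc s t)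
    · exact hwc.mul ((Real.continuous_exp.comp (continuous_const.mul continuous_id).neg).continuousOn)
    · rw [interior_Icc]
      exact fun r hr => ((hψderiv r hr).differentiableAt).differentiableWithinAt
    · rw [interior_Icc]
      intro r hr
      rw [(hψderiv r hr).deriv]
      have hφw : φ r ≤ w r := h r (Set.mem_Icc.mpr ⟨hr.1.le, hr.2.le⟩)
      have : K * φ r - K * w r ≤ 0 := by nlinarith
      exact mul_nonpos_of_nonpos_of_nonneg this (Real.exp_pos _).le
  have hst' : ψ t ≤ ψ s :=
    hψanti (Set.mem_Icc.mpr ⟨le_rfl, hst⟩) (Set.mem_Icc.mpr ⟨hst, le_rfl⟩) hst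
  have hψs : ψ s = c * Real.exp (-(K * s)) := by
    simp [hψ, hw, intervalIntegral.integral_same]
  have hwt : φ t ≤ w t := h t (Set.mem_Icc.mpr ⟨hst, le_rfl⟩)
  have key : w t * Real.exp (-(K * t)) ≤ c * Real.exp (-(K * s)) := by
    rw [← hψs]; exact hst'
  have := mul_le_mul_of_nonneg_right key (Real.exp_pos (K * t)).le
  rw [mul_assoc, ← Real.exp_add, mul_assoc, ← Real.exp_add] at this
  simp only [neg_add_cancel, Real.exp_zero, mul_one] at this
  calc φ t ≤ w t := hwt
    _ = w t * 1 := (mul_one _).symm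
    _ ≤ c * Real.exp (-(K * s) + K * t) := by simpa using this
    _ = c * Real.exp (K * (t - s)) := by ring_nf

lemma fub {f : ℝ → ℝ} {s t B : ℝ} (hst : s ≤ t) (hf : IntegrableOn f (Set.Ioc s t)) :
    ∫ τ in Set.Ioc s t, (B * Real.exp (B * τ)) * (∫ σ in Set.Ioc s τ, f σ)
      = ∫ σ in Set.Ioc s t, (Real.exp (B * t) - Real.exp (B * σ)) * f σ := by
  set μ := volume.restrict (Set.Ioc s t) with hμ
  set g : ℝ → ℝ := fun τ => B * Real.exp (B * τ) with hg
  have hgc : Continuous g := continuous_const.mul (Real.continuous_exp.comp (continuous_const.mul continuous_id))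
  have hgi : Integrable g μ := hgc.integrableOn_Ioc
  set F : ℝ × ℝ → ℝ := fun p => if p.2 ≤ p.1 then g p.1 * f p.2 else 0 with hF
  have hFeq : F = Set.indicator {p : ℝ × ℝ | p.2 ≤ p.1} (fun p => g p.1 * f p.2) := by
    funext p
    simp only [hF, Set.indicator_apply, Set.mem_setOf_eq]
  have hFi : Integrable F (μ.prod μ) := by
    rw [hFeq]
    exact (hgi.mul_prod hf).indicator (measurableSet_le measurable_snd measurable_fst)
  have swap : ∫ τ, (∫ σ, F (τ, σ) ∂μ) ∂μ = ∫ σ, (∫ τ, F (τ, σ) ∂μ) ∂μ :=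
    integral_integral_swap hFi
  have lhs : ∫ τ, (∫ σ, F (τ, σ) ∂μ) ∂μ
      = ∫ τ in Set.Ioc s t, g τ * (∫ σ in Set.Ioc s τ, f σ) := by
    apply setIntegral_congr_fun measurableSet_Ioc
    intro τ hτ
    have h1 : (fun σ => F (τ, σ)) = Set.indicator (Set.Iic τ) (fun σ => g τ * f σ) := by
      funext σ
      simp only [hF, Set.indicator_apply, Set.mem_Iic]
    show (∫ σ, F (τ, σ) ∂μ) = g τ * ∫ σ in Set.Ioc s τ, f σ
    rw [h1, integral_indicator measurableSet_Iic, hμ, Measure.restrict_restrict measurableSet_Iic]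
    have h2 : Set.Iic τ ∩ Set.Ioc s t = Set.Ioc s τ := by
      ext σ
      simp only [Set.mem_inter_iff, Set.mem_Iic, Set.mem_Ioc]
      constructor
      · rintro ⟨h1', h2', _⟩; exact ⟨h2', h1'⟩
      · rintro ⟨h1', h2'⟩; exact ⟨h2', h1', h2'.trans hτ.2⟩
    rw [h2, integral_const_mul]
  have rhs : ∫ σ, (∫ τ, F (τ, σ) ∂μ) ∂μ
      = ∫ σ in Set.Ioc s t, (Real.exp (B * t) - Real.exp (B * σ)) * f σ := by
    apply setIntegral_congr_fun measurableSet_Ioc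
    intro σ hσ
    have h1 : (fun τ => F (τ, σ)) = Set.indicator (Set.Ici σ) (fun τ => g τ * f σ) := by
      funext τ
      simp only [hF, Set.indicator_apply, Set.mem_Ici]
    show (∫ τ, F (τ, σ) ∂μ) = (Real.exp (B * t) - Real.exp (B * σ)) * f σ
    rw [h1, integral_indicator measurableSet_Ici, hμ, Measure.restrict_restrict measurableSet_Ici]
    have h2 : Set.Ici σ ∩ Set.Ioc s t = Set.Icc σ t := by
      ext τ
      simp only [Set.mem_inter_iff, Set.mem_Ici, Set.mem_Ioc, Set.mem_Icc]
      constructor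
      · rintro ⟨h1', _, h3'⟩; exact ⟨h1', h3'⟩
      · rintro ⟨h1', h2'⟩; exact ⟨h1', hσ.1.trans_le h1', h2'⟩
    rw [h2, integral_mul_const, integral_Icc_eq_integral_Ioc,
      ← intervalIntegral.integral_of_le hσ.2, hg, expFTC]
  rw [← lhs, swap, rhs]

lemma aux {N : ℕ} (hN : 0 < N) {B : ℝ} (hB : 0 < B) (x x' : Fin N → ℝ → ℝ)
    (hint : ∀ i, ∀ t : ℝ, 0 ≤ t → IntervalIntegrable (x' i) volume 0 t)
    (hsol : ∀ i, ∀ t : ℝ, 0 ≤ t → x i t = x i 0 + ∫ s in (0 : ℝ)..t, x' i s)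
    (hub : ∀ i, ∀ᵐ t ∂(volume.restrict (Set.Ici (0:ℝ))),
      x' i t ≤ B * ((⨆ j, x j t) - x i t)) :
    AntitoneOn (fun t => ⨆ j, x j t) (Set.Ici (0:ℝ)) := by
  haveI : Nonempty (Fin N) := ⟨⟨0, hN⟩⟩
  set M : ℝ → ℝ := fun t => ⨆ j, x j t with hM
  have hec : Continuous (fun τ : ℝ => Real.exp (B * τ)) :=
    Real.continuous_exp.comp (continuous_const.mul continuous_id)
  have hxc : ∀ i (T : ℝ), 0 ≤ T → ContinuousOn (x i) (Set.Icc 0 T) := by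
    intro i T hT
    have hi : IntegrableOn (x' i) (Set.uIcc 0 T) := by
      rw [Set.uIcc_of_le hT, integrableOn_Icc_iff_integrableOn_Ioc]
      exact (intervalIntegrable_iff_integrableOn_Ioc_of_le hT).mp (hint i T hT)
    have h1 : ContinuousOn (fun τ => x i 0 + ∫ σ in (0:ℝ)..τ, x' i σ) (Set.uIcc 0 T) :=
      continuousOn_const.add (intervalIntegral.continuousOn_primitive_interval hi)
    rw [Set.uIcc_of_le hT] at h1
    exact h1.congr (fun τ hτ => hsol i τ hτ.1)
  have hMc : ∀ (T : ℝ), 0 ≤ T → ContinuousOn M (Set.Icc 0 T) := by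
    intro T hT
    have h1 : ContinuousOn
        (fun t => Finset.univ.sup' Finset.univ_nonempty (fun j => x j t)) (Set.Icc 0 T) :=
      ContinuousOn.finset_sup'_apply _ (fun i _ => hxc i T hT)
    exact h1.congr (fun t _ => (Finset.sup'_univ_eq_ciSup (fun j => x j t)).symm)
  have hbdd : ∀ τ : ℝ, BddAbove (Set.range fun j => x j τ) :=
    fun τ => (Set.finite_range _).bddAbove
  -- the key weighted integral inequality
  have W : ∀ i (s r : ℝ), 0 ≤ s → s ≤ r →
      Real.exp (B*r) * x i r
        ≤ Real.exp (B*s) * x i s + ∫ τ in s..r, B * (Real.exp (B*τ) * M τ) := by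
    intro i s r hs hsr
    have hr0 : (0:ℝ) ≤ r := hs.trans hsr
    have hxint : IntervalIntegrable (x' i) volume s r :=
      (hint i s hs).symm.trans (hint i r hr0)
    have hxrep : ∀ τ, s ≤ τ → x i τ = x i s + ∫ σ in s..τ, x' i σ := by
      intro τ h1
      have h2 := intervalIntegral.integral_add_adjacent_intervals (hint i s hs)
        ((hint i s hs).symm.trans (hint i τ (hs.trans h1)))
      have e1 := hsol i τ (hs.trans h1)
      have e2 := hsol i s hs
      rw [e1, e2]; linarith
    have hFc : ContinuousOn (fun τ => ∫ σ in s..τ, x' i σ) (Set.Icc s r) := by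
      have hi : IntegrableOn (x' i) (Set.uIcc s r) := by
        rw [Set.uIcc_of_le hsr, integrableOn_Icc_iff_integrableOn_Ioc]
        exact (intervalIntegrable_iff_integrableOn_Ioc_of_le hsr).mp hxint
      have h1 := intervalIntegral.continuousOn_primitive_interval hi
      rwa [Set.uIcc_of_le hsr] at h1
    have hxcsr : ContinuousOn (x i) (Set.Icc s r) :=
      (continuousOn_const.add hFc).congr (fun τ hτ => hxrep τ hτ.1)
    have I1 : IntervalIntegrable (fun τ => Real.exp (B * τ) * x' i τ) volume s r :=
      hxint.continuousOn_mul hec.continuousOn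
    have I2 : IntervalIntegrable (fun τ => B * (Real.exp (B * τ) * x i τ)) volume s r := by
      apply ContinuousOn.intervalIntegrable
      rw [Set.uIcc_of_le hsr]
      exact continuousOn_const.mul (hec.continuousOn.mul hxcsr)
    have I3 : IntervalIntegrable (fun τ => B * (Real.exp (B * τ) * M τ)) volume s r := by
      apply ContinuousOn.intervalIntegrable
      rw [Set.uIcc_of_le hsr]
      exact continuousOn_const.mul (hec.continuousOn.mul
        ((hMc r hr0).mono (Set.Icc_subset_Icc hs le_rfl)))
    have hIoc : IntegrableOn (x' i) (Set.Ioc s r) :=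
      (intervalIntegrable_iff_integrableOn_Ioc_of_le hsr).mp hxint
    -- the integration-by-parts identity
    have ID : Real.exp (B*r) * x i r - Real.exp (B*s) * x i s
        = ∫ τ in s..r, (Real.exp (B*τ) * x' i τ + B * (Real.exp (B*τ) * x i τ)) := by
      rw [intervalIntegral.integral_add I1 I2]
      have e4 : (∫ τ in s..r, B * (Real.exp (B*τ) * x i τ))
          = ∫ τ in s..r, (x i s * (B * Real.exp (B*τ))
              + B * Real.exp (B*τ) * (∫ σ in s..τ, x' i σ)) := by
        apply intervalIntegral.integral_congr
        intro τ hτ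
        rw [Set.uIcc_of_le hsr] at hτ
        show B * (Real.exp (B * τ) * x i τ)
          = x i s * (B * Real.exp (B * τ)) + B * Real.exp (B * τ) * ∫ σ in s..τ, x' i σ
        rw [hxrep τ hτ.1]; ring
      have ia : IntervalIntegrable (fun τ => x i s * (B * Real.exp (B*τ))) volume s r :=
        (continuous_const.mul (continuous_const.mul hec)).intervalIntegrable s r
      have ib : IntervalIntegrable
          (fun τ => B * Real.exp (B*τ) * (∫ σ in s..τ, x' i σ)) volume s r := by
        apply ContinuousOn.intervalIntegrable
        rw [Set.uIcc_of_le hsr]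
        exact (continuous_const.mul hec).continuousOn.mul hFc
      rw [e4, intervalIntegral.integral_add ia ib]
      have e5 : (∫ τ in s..r, x i s * (B * Real.exp (B*τ)))
          = x i s * (Real.exp (B*r) - Real.exp (B*s)) := by
        rw [intervalIntegral.integral_const_mul, expFTC]
      have e6 : (∫ τ in s..r, B * Real.exp (B*τ) * (∫ σ in s..τ, x' i σ))
          = Real.exp (B*r) * (∫ σ in s..r, x' i σ)
            - ∫ σ in s..r, Real.exp (B*σ) * x' i σ := by
        rw [intervalIntegral.integral_of_le hsr]
        have e7 : ∫ τ in Set.Ioc s r, B * Real.exp (B*τ) * (∫ σ in s..τ, x' i σ)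
            = ∫ τ in Set.Ioc s r, (B * Real.exp (B*τ)) * (∫ σ in Set.Ioc s τ, x' i σ) := by
          apply setIntegral_congr_fun measurableSet_Ioc
          intro τ hτ
          show B * Real.exp (B * τ) * (∫ σ in s..τ, x' i σ)
            = (B * Real.exp (B * τ)) * ∫ σ in Set.Ioc s τ, x' i σ
          rw [intervalIntegral.integral_of_le hτ.1.le]
        rw [e7, fub hsr hIoc]
        have e8 : ∫ σ in Set.Ioc s r, (Real.exp (B*r) - Real.exp (B*σ)) * x' i σ
            = (∫ σ in Set.Ioc s r, Real.exp (B*r) * x' i σ)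
              - ∫ σ in Set.Ioc s r, Real.exp (B*σ) * x' i σ := by
          rw [← integral_sub (hIoc.const_mul _)
            ((intervalIntegrable_iff_integrableOn_Ioc_of_le hsr).mp I1)]
          apply setIntegral_congr_fun measurableSet_Ioc
          intro σ _
          ring
        rw [e8, integral_const_mul, ← intervalIntegral.integral_of_le hsr,
          ← intervalIntegral.integral_of_le hsr]
      rw [e5, e6]
      have e9 := hxrep r hsr
      have e10 : (∫ σ in s..r, x' i σ) = x i r - x i s := by rw [e9]; ring
      rw [e10]
      ring
    -- monotonicity of the integral using the a.e. bound
    have hle : (fun τ => Real.exp (B*τ) * x' i τ + B * (Real.exp (B*τ) * x i τ))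
        ≤ᵐ[volume.restrict (Set.Icc s r)] (fun τ => B * (Real.exp (B*τ) * M τ)) := by
      have h1 : ∀ᵐ τ ∂(volume.restrict (Set.Icc s r)),
          x' i τ ≤ B * ((⨆ j, x j τ) - x i τ) :=
        ae_restrict_of_ae_restrict_of_subset
          (fun τ hτ => hs.trans hτ.1) (hub i)
      filter_upwards [h1] with τ hτ
      have he := Real.exp_pos (B*τ)
      have h2 := mul_le_mul_of_nonneg_left hτ he.le
      have h3 : M τ = ⨆ j, x j τ := rfl
      nlinarith [h2]
    have MONO := intervalIntegral.integral_mono_ae_restrict hsr (I1.add I2) I3 hle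
    linarith [MONO, ID.ge, ID.le]
  -- conclude antitonicity via Gronwall
  intro a ha b hb hab
  simp only [Set.mem_Ici] at ha hb
  have hb0 : (0:ℝ) ≤ b := hb
  have hφ : ContinuousOn (fun r => Real.exp (B*r) * M r) (Set.Icc a b) :=
    hec.continuousOn.mul ((hMc b hb0).mono (Set.Icc_subset_Icc ha le_rfl))
  have hg : ∀ r ∈ Set.Icc a b,
      Real.exp (B*r) * M r
        ≤ Real.exp (B*a) * M a + ∫ τ in a..r, B * (Real.exp (B*τ) * M τ) := by
    intro r hr
    set Q := Real.exp (B*a) * M a + ∫ τ in a..r, B * (Real.exp (B*τ) * M τ) with hQ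
    have key : ∀ i, Real.exp (B*r) * x i r ≤ Q := by
      intro i
      refine (W i a r ha hr.1).trans (add_le_add_left ?_ _)
      exact mul_le_mul_of_nonneg_left (le_ciSup (hbdd a) i) (Real.exp_pos _).le
    have h1 : M r ≤ Q / Real.exp (B*r) := by
      apply ciSup_le
      intro i
      rw [le_div_iff₀ (Real.exp_pos _), mul_comm]
      exact key i
    calc Real.exp (B*r) * M r = M r * Real.exp (B*r) := mul_comm _ _
      _ ≤ Q := by rwa [← le_div_iff₀ (Real.exp_pos _)]
  have hgr := gron hab hB.le hφ hg
  have hE : Real.exp (B*a) * M a * Real.exp (B*(b-a)) = Real.exp (B*b) * M a := by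
    rw [mul_right_comm, ← Real.exp_add]
    ring_nf
  rw [hE] at hgr
  exact le_of_mul_le_mul_left hgr (Real.exp_pos _)

end helpers

/-- if `x_1, …, x_N` are absolutely continuous on `[0,∞)` (expressed by
the fundamental theorem of calculus with a locally integrable a.e. derivative `x'`) and
`B (min_j x_j(t) - x_i(t)) ≤ ẋ_i(t) ≤ B (max_j x_j(t) - x_i(t))` for a.e. `t ≥ 0`,
then `M(t) = max_j x_j(t)` is nonincreasing, `m(t) = min_j x_j(t)` is nondecreasing,
every `x_i(t)` stays in `[m(0), M(0)]`, and `M` and `m` converge to finite limits. -/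
theorem stmt2 {N : ℕ} (hN : 0 < N) (B : ℝ) (hB : 0 < B)
    (x x' : Fin N → ℝ → ℝ)
    (hint : ∀ i, ∀ t : ℝ, 0 ≤ t → IntervalIntegrable (x' i) volume 0 t)
    (hsol : ∀ i, ∀ t : ℝ, 0 ≤ t → x i t = x i 0 + ∫ s in (0 : ℝ)..t, x' i s)
    (hbound : ∀ i, ∀ᵐ t ∂(volume.restrict (Set.Ici (0 : ℝ))),
      B * ((⨅ j, x j t) - x i t) ≤ x' i t ∧ x' i t ≤ B * ((⨆ j, x j t) - x i t)) :
    AntitoneOn (fun t => ⨆ j, x j t) (Set.Ici (0 : ℝ)) ∧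
    MonotoneOn (fun t => ⨅ j, x j t) (Set.Ici (0 : ℝ)) ∧
    (∀ i, ∀ t : ℝ, 0 ≤ t → x i t ∈ Set.Icc (⨅ j, x j 0) (⨆ j, x j 0)) ∧
    (∃ LM : ℝ, Tendsto (fun t => ⨆ j, x j t) atTop (𝓝 LM)) ∧
    (∃ Lm : ℝ, Tendsto (fun t => ⨅ j, x j t) atTop (𝓝 Lm)) := by
  haveI : Nonempty (Fin N) := ⟨⟨0, hN⟩⟩
  have hMa : AntitoneOn (fun t => ⨆ j, x j t) (Set.Ici (0 : ℝ)) :=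
    aux hN hB x x' hint hsol (fun i => (hbound i).mono fun t ht => ht.2)
  -- the min side
  have hya : AntitoneOn (fun t => ⨆ j, -(x j t)) (Set.Ici (0 : ℝ)) := by
    apply aux hN hB (fun i t => -(x i t)) (fun i t => -(x' i t))
      (fun i t ht => (hint i t ht).neg)
      (fun i t ht => by
        show -(x i t) = -(x i 0) + ∫ s in (0:ℝ)..t, -(x' i s)
        rw [intervalIntegral.integral_neg, hsol i t ht]; ring)
    intro i
    filter_upwards [hbound i] with t ht
    have h1 := ht.1
    rw [isup_neg (fun j => x j t)]
    linarith
  have hma : MonotoneOn (fun t => ⨅ j, x j t) (Set.Ici (0 : ℝ)) := by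
    intro a ha b hb hab
    have := hya ha hb hab
    simp only [isup_neg (fun j => x j _)] at this
    show (⨅ j, x j a) ≤ ⨅ j, x j b
    linarith
  have hbddA : ∀ τ : ℝ, BddAbove (Set.range fun j => x j τ) :=
    fun τ => (Set.finite_range _).bddAbove
  have hbddB : ∀ τ : ℝ, BddBelow (Set.range fun j => x j τ) :=
    fun τ => (Set.finite_range _).bddBelow
  have hIcc : ∀ i, ∀ t : ℝ, 0 ≤ t → x i t ∈ Set.Icc (⨅ j, x j 0) (⨆ j, x j 0) := by
    intro i t ht
    constructor
    · calc (⨅ j, x j 0) ≤ ⨅ j, x j t := hma (le_refl (0:ℝ)) ht ht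
        _ ≤ x i t := ciInf_le (hbddB t) i
    · calc x i t ≤ ⨆ j, x j t := le_ciSup (hbddA t) i
        _ ≤ ⨆ j, x j 0 := hMa (le_refl (0:ℝ)) ht ht
  refine ⟨hMa, hma, hIcc, ?_, ?_⟩
  · -- limit of sup
    set g : ℝ → ℝ := fun t => ⨆ j, x j (max t 0) with hg
    have hganti : Antitone g := by
      intro a b hab
      exact hMa (le_max_right a 0) (le_max_right b 0) (max_le_max hab le_rfl)
    have hgbdd : BddBelow (Set.range g) := by
      refine ⟨⨅ j, x j 0, ?_⟩
      rintro _ ⟨t, rfl⟩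
      calc (⨅ j, x j 0) ≤ ⨅ j, x j (max t 0) :=
            hma (le_refl (0:ℝ)) (le_max_right t 0) (le_max_right t 0)
        _ ≤ x ⟨0, hN⟩ (max t 0) := ciInf_le (hbddB _) _
        _ ≤ ⨆ j, x j (max t 0) := le_ciSup (hbddA _) _
    refine ⟨⨅ t, g t, ?_⟩
    refine (tendsto_atTop_ciInf hganti hgbdd).congr' ?_
    filter_upwards [eventually_ge_atTop (0:ℝ)] with t ht
    rw [hg]
    simp [max_eq_left ht]
  · set g : ℝ → ℝ := fun t => ⨅ j, x j (max t 0) with hg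
    have hgmono : Monotone g := by
      intro a b hab
      exact hma (le_max_right a 0) (le_max_right b 0) (max_le_max hab le_rfl)
    have hgbdd : BddAbove (Set.range g) := by
      refine ⟨⨆ j, x j 0, ?_⟩
      rintro _ ⟨t, rfl⟩
      calc (⨅ j, x j (max t 0)) ≤ x ⟨0, hN⟩ (max t 0) := ciInf_le (hbddB _) _
        _ ≤ ⨆ j, x j (max t 0) := le_ciSup (hbddA _) _
        _ ≤ ⨆ j, x j 0 := hMa (le_refl (0:ℝ)) (le_max_right t 0) (le_max_right t 0)
    refine ⟨⨆ t, g t, ?_⟩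
    refine (tendsto_atTop_ciSup hgmono hgbdd).congr' ?_
    filter_upwards [eventually_ge_atTop (0:ℝ)] with t ht
    rw [hg]
    simp [max_eq_left ht]
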